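/- Let T be a finite tree with radius 2 and diameter 4, and let v be the unique vertex of T with eccentricity 2. If ℓ denotes the number of vertices of T at distance exactly 2 from v, then GC(T) = ℓ + 2. -/
import Mathlib


open SimpleGraph Finset

variable {V : Type*} [Fintype V] [DecidableEq V]

/-- `S` is a dominating set of the graph `G`. -/
def IsDomSet (G : SimpleGraph V) (S : Finset V) : Prop :=
  ∀ v : V, v ∈ S ∨ ∃ u ∈ S, G.Adj u v

/-- `S` is a global dominating set of `G`: it dominates both `G` and its complement. -/
def IsGlobalDomSet (G : SimpleGraph V) (S : Finset V) : Prop :=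
  IsDomSet G S ∧ IsDomSet Gᶜ S

/-- Disjoint sets `A` and `B` form a global coalition in `G`. -/
def IsGlobalCoalition (G : SimpleGraph V) (A B : Finset V) : Prop :=
  Disjoint A B ∧ ¬ IsGlobalDomSet G A ∧ ¬ IsGlobalDomSet G B ∧ IsGlobalDomSet G (A ∪ B)

/-- `π` is a global coalition partition (gc-partition) of `G`. -/
def IsGCPartition (G : SimpleGraph V) (π : Finpartition (Finset.univ : Finset V)) : Prop :=
  ∀ A ∈ π.parts, ¬ IsGlobalDomSet G A ∧ ∃ B ∈ π.parts, B ≠ A ∧ IsGlobalCoalition G A B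

/-- The global coalition number `GC(G)`: the maximum number of parts in a gc-partition of `G`. -/
noncomputable def globalCoalitionNumber (G : SimpleGraph V) : ℕ :=
  sSup {n | ∃ π : Finpartition (Finset.univ : Finset V), IsGCPartition G π ∧ π.parts.card = n}

/-- The eccentricity of a vertex: the maximum distance from `v` to any vertex. -/
noncomputable def eccentricity (G : SimpleGraph V) (v : V) : ℕ :=
  Finset.univ.sup fun u => G.dist v u

/-- The radius of a graph: the minimum eccentricity over all vertices. -/
noncomputable def graphRadius (G : SimpleGraph V) : ℕ :=
  sInf (Set.range (eccentricity G))

/-- The diameter of a graph: the maximum eccentricity over all vertices. -/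
noncomputable def graphDiam (G : SimpleGraph V) : ℕ :=
  Finset.univ.sup (eccentricity G)

/-- The abstract "global dominating set" condition for our structured trees. -/
def Cond (v : V) (N L : Finset V) (p : V → V) (S : Finset V) : Prop :=
  (∀ l ∈ L, l ∈ S ∨ p l ∈ S) ∧
  (∀ n ∈ N, n ∈ S ∨ v ∈ S ∨ ∃ c ∈ L, p c = n ∧ c ∈ S) ∧
  (v ∈ S ∨ ∃ n ∈ N, n ∈ S) ∧
  (v ∈ S ∨ ∃ l ∈ L, l ∈ S)

/-- Structure of a radius-2, diameter-4 tree with centre `v`. -/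
structure Struct (v : V) (N L : Finset V) (p : V → V) : Prop where
  cover : ∀ u : V, u = v ∨ u ∈ N ∨ u ∈ L
  vN : v ∉ N
  vL : v ∉ L
  NL : ∀ u ∈ N, u ∉ L
  pmem : ∀ l ∈ L, p l ∈ N
  two : ∃ l₁ ∈ L, ∃ l₂ ∈ L, p l₁ ≠ p l₂

namespace Struct

variable {v : V} {N L : Finset V} {p : V → V} (hs : Struct v N L p)

lemma cond_of_v_mem {S : Finset V} (hvS : v ∈ S) (h1 : ∀ l ∈ L, l ∈ S ∨ p l ∈ S) :
    Cond v N L p S :=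
  ⟨h1, fun n _ => Or.inr (Or.inl hvS), Or.inl hvS, Or.inl hvS⟩

include hs

lemma N_nonempty : N.Nonempty := by
  obtain ⟨l₁, h₁, -⟩ := hs.two
  exact ⟨p l₁, hs.pmem l₁ h₁⟩

lemma L_nonempty : L.Nonempty := by
  obtain ⟨l₁, h₁, -⟩ := hs.two
  exact ⟨l₁, h₁⟩

end Struct

section LB
set_option linter.unusedSectionVars false
variable {v : V} {N L : Finset V} {p : V → V} {G : SimpleGraph V}

theorem Struct.lower (hs : Struct v N L p)
    (hchar : ∀ S : Finset V, IsGlobalDomSet G S ↔ Cond v N L p S) :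
    ∃ π : Finpartition (Finset.univ : Finset V),
      IsGCPartition G π ∧ π.parts.card = L.card + 2 := by
  classical
  set parts : Finset (Finset V) := insert {v} (insert N (L.image fun l => ({l} : Finset V)))
    with hparts
  have hmem : ∀ A : Finset V, A ∈ parts ↔ A = {v} ∨ A = N ∨ ∃ l ∈ L, A = {l} := by
    intro A
    simp [hparts, eq_comm]
  -- mutual disjointness
  have hdisj : ∀ A ∈ parts, ∀ B ∈ parts, A ≠ B → Disjoint A B := by
    intro A hA B hB hAB
    rw [hmem] at hA hB
    rcases hA with rfl | rfl | ⟨l, hl, rfl⟩ <;> rcases hB with rfl | rfl | ⟨l', hl', rfl⟩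
    · exact absurd rfl hAB
    · simpa using hs.vN
    · simp only [Finset.disjoint_singleton_right, Finset.mem_singleton]
      rintro rfl; exact hs.vL hl'
    · simpa using hs.vN
    · exact absurd rfl hAB
    · simp only [Finset.disjoint_singleton_right]
      intro h; exact hs.NL l' h hl'
    · simp only [Finset.disjoint_singleton_left, Finset.mem_singleton]
      rintro rfl; exact hs.vL hl
    · simp only [Finset.disjoint_singleton_left]
      intro h; exact hs.NL l h hl
    · simp only [Finset.disjoint_singleton_left, Finset.mem_singleton]
      rintro rfl; exact hAB rfl
  have hNne := hs.N_nonempty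
  let π : Finpartition (Finset.univ : Finset V) :=
    { parts := parts
      supIndep := by
        rw [Finset.supIndep_iff_pairwiseDisjoint]
        intro A hA B hB hAB
        exact hdisj A hA B hB hAB
      sup_parts := by
        apply Finset.Subset.antisymm
        · intro u _; exact Finset.mem_univ u
        · intro u _
          rw [Finset.mem_sup]
          rcases hs.cover u with rfl | hu | hu
          · exact ⟨{u}, by rw [hmem]; exact Or.inl rfl, Finset.mem_singleton_self u⟩
          · exact ⟨N, by rw [hmem]; exact Or.inr (Or.inl rfl), hu⟩
          · exact ⟨{u}, by rw [hmem]; exact Or.inr (Or.inr ⟨u, hu, rfl⟩), Finset.mem_singleton_self u⟩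
      bot_notMem := by
        rw [hmem]
        push_neg
        refine ⟨?_, ?_, ?_⟩
        · intro h; exact absurd (h ▸ Finset.mem_singleton_self v : v ∈ (⊥ : Finset V)) (by simp)
        · intro h; exact absurd hNne (by rw [← h]; simp)
        · intro l hl h
          exact absurd (h ▸ Finset.mem_singleton_self l : l ∈ (⊥ : Finset V)) (by simp) }
  -- non-domination facts
  have notCondV : ¬ Cond v N L p ({v} : Finset V) := by
    obtain ⟨l₁, h₁, -⟩ := hs.two
    intro hc
    rcases hc.1 l₁ h₁ with h | h
    · rw [Finset.mem_singleton] at h; exact hs.vL (h ▸ h₁)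
    · rw [Finset.mem_singleton] at h; exact hs.vN (h ▸ hs.pmem l₁ h₁)
  have notCondN : ¬ Cond v N L p N := by
    intro hc
    rcases hc.2.2.2 with h | ⟨l, hl, hlN⟩
    · exact hs.vN h
    · exact hs.NL l hlN hl
  have notCondl : ∀ l ∈ L, ¬ Cond v N L p ({l} : Finset V) := by
    intro l hl hc
    obtain ⟨l₁, h₁, l₂, h₂, h12⟩ := hs.two
    have : ∃ l' ∈ L, p l' ≠ p l := by
      by_cases h : p l₁ = p l
      · exact ⟨l₂, h₂, by rw [← h]; exact fun e => h12 e.symm⟩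
      · exact ⟨l₁, h₁, h⟩
    obtain ⟨l', hl', hne⟩ := this
    rcases hc.1 l' hl' with h | h
    · rw [Finset.mem_singleton] at h; exact hne (h ▸ rfl)
    · rw [Finset.mem_singleton] at h
      exact hs.NL (p l') (hs.pmem l' hl') (h ▸ hl)
  have condvN : Cond v N L p ({v} ∪ N) := by
    apply Struct.cond_of_v_mem (by simp)
    intro l hl
    exact Or.inr (Finset.mem_union_right _ (hs.pmem l hl))
  have condlN : ∀ l ∈ L, Cond v N L p ({l} ∪ N) := by
    intro l hl
    obtain ⟨n, hn⟩ := hNne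
    refine ⟨?_, ?_, ?_, ?_⟩
    · intro l' hl'
      exact Or.inr (Finset.mem_union_right _ (hs.pmem l' hl'))
    · intro n' hn'
      exact Or.inl (Finset.mem_union_right _ hn')
    · exact Or.inr ⟨n, hn, Finset.mem_union_right _ hn⟩
    · exact Or.inr ⟨l, hl, Finset.mem_union_left _ (Finset.mem_singleton_self l)⟩
  have hVparts : ({v} : Finset V) ∈ parts := by rw [hmem]; exact Or.inl rfl
  have hNparts : N ∈ parts := by rw [hmem]; exact Or.inr (Or.inl rfl)
  have hNneqV : N ≠ ({v} : Finset V) := fun h => hs.vN (h ▸ Finset.mem_singleton_self v)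
  refine ⟨π, ?_, ?_⟩
  · intro A hA
    have hA' := hA
    rw [hmem] at hA'
    rcases hA' with rfl | rfl | ⟨l, hl, rfl⟩
    · refine ⟨fun h => notCondV ((hchar _).mp h), N, hNparts, hNneqV, ?_⟩
      refine ⟨hdisj _ hVparts _ hNparts hNneqV.symm, fun h => notCondV ((hchar _).mp h),
        fun h => notCondN ((hchar _).mp h), (hchar _).mpr condvN⟩
    · refine ⟨fun h => notCondN ((hchar _).mp h), {v}, hVparts, hNneqV.symm, ?_⟩
      refine ⟨hdisj _ hNparts _ hVparts hNneqV, fun h => notCondN ((hchar _).mp h),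
        fun h => notCondV ((hchar _).mp h), (hchar _).mpr (by rwa [Finset.union_comm])⟩
    · have hlneqN : N ≠ ({l} : Finset V) := by
        intro h
        exact hs.NL l (h ▸ Finset.mem_singleton_self l) hl
      have hlparts : ({l} : Finset V) ∈ parts := by
        rw [hmem]; exact Or.inr (Or.inr ⟨l, hl, rfl⟩)
      refine ⟨fun h => notCondl l hl ((hchar _).mp h), N, hNparts, hlneqN, ?_⟩
      refine ⟨hdisj _ hlparts _ hNparts hlneqN.symm, fun h => notCondl l hl ((hchar _).mp h),
        fun h => notCondN ((hchar _).mp h), (hchar _).mpr (condlN l hl)⟩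
  · show parts.card = L.card + 2
    have h1 : ({v} : Finset V) ∉ insert N (L.image fun l => ({l} : Finset V)) := by
      simp only [Finset.mem_insert, Finset.mem_image]
      push_neg
      refine ⟨hNneqV.symm, ?_⟩
      intro l hl h
      have : l = v := by
        have := h ▸ Finset.mem_singleton_self l
        rwa [Finset.mem_singleton] at this
      exact hs.vL (this ▸ hl)
    have h2 : N ∉ L.image fun l => ({l} : Finset V) := by
      simp only [Finset.mem_image]
      rintro ⟨l, hl, h⟩
      exact hs.NL l (h ▸ Finset.mem_singleton_self l) hl
    rw [hparts, Finset.card_insert_of_notMem h1, Finset.card_insert_of_notMem h2,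
      Finset.card_image_of_injective _ Finset.singleton_injective]


end LB

section UB
set_option linter.unusedSectionVars false
variable {v : V} {N L : Finset V} {p : V → V} {G : SimpleGraph V}

lemma Struct.exists_child (hs : Struct v N L p) {A B : Finset V}
    (hc : Cond v N L p (A ∪ B)) (hvA : v ∉ A) (hvB : v ∉ B) (hAL : A ∩ L = ∅)
    {n : V} (hn : n ∈ N) (hnA : n ∉ A) (hnB : n ∉ B) :
    ∃ c ∈ B ∩ L, p c = n := by
  rcases hc.2.1 n hn with h | h | ⟨c, hcL, hpc, hcAB⟩
  · rcases Finset.mem_union.mp h with h | h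
    · exact absurd h hnA
    · exact absurd h hnB
  · rcases Finset.mem_union.mp h with h | h
    · exact absurd h hvA
    · exact absurd h hvB
  · rcases Finset.mem_union.mp hcAB with h | h
    · exact absurd (Finset.mem_inter.mpr ⟨h, hcL⟩) (by rw [hAL]; exact Finset.notMem_empty c)
    · exact ⟨c, Finset.mem_inter.mpr ⟨h, hcL⟩, hpc⟩

lemma Struct.full_of_two (hs : Struct v N L p) {A A' W : Finset V}
    (h : Cond v N L p (A ∪ W)) (h' : Cond v N L p (A' ∪ W))
    (hAL : A ∩ L = ∅) (hA'L : A' ∩ L = ∅) (hdisj : Disjoint A A') :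
    ∀ l ∈ L, l ∈ W ∨ p l ∈ W := by
  intro l hl
  by_contra hcon
  push_neg at hcon
  obtain ⟨hlW, hplW⟩ := hcon
  have hone : ∀ (X : Finset V), X ∩ L = ∅ → Cond v N L p (X ∪ W) → p l ∈ X := by
    intro X hXL hX
    rcases hX.1 l hl with hm | hm
    · rcases Finset.mem_union.mp hm with hm | hm
      · exact absurd (Finset.mem_inter.mpr ⟨hm, hl⟩) (by rw [hXL]; exact Finset.notMem_empty l)
      · exact absurd hm hlW
    · rcases Finset.mem_union.mp hm with hm | hm
      · exact hm
      · exact absurd hm hplW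
  exact Finset.disjoint_left.mp hdisj (hone A hAL h) (hone A' hA'L h')

lemma Struct.collision (hs : Struct v N L p) {A A' B : Finset V}
    (hc : Cond v N L p (A ∪ B)) (hc' : Cond v N L p (A' ∪ B)) (hnB : ¬ Cond v N L p B)
    (hvA : v ∉ A) (hvA' : v ∉ A') (hvB : v ∉ B)
    (hAL : A ∩ L = ∅) (hA'L : A' ∩ L = ∅)
    (hAA' : Disjoint A A') (hAB : Disjoint A B) (hA'B : Disjoint A' B) :
    B = L ∧ (∀ n ∈ N, ∃ c ∈ L, p c = n) := by
  have hfull : ∀ l ∈ L, l ∈ B ∨ p l ∈ B := hs.full_of_two hc hc' hAL hA'L hAA'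
  have hB4 : ∃ l ∈ L, l ∈ B := by
    rcases hc.2.2.2 with h | ⟨l, hl, hlAB⟩
    · rcases Finset.mem_union.mp h with h | h
      · exact absurd h hvA
      · exact absurd h hvB
    · rcases Finset.mem_union.mp hlAB with h | h
      · exact absurd (Finset.mem_inter.mpr ⟨h, hl⟩) (by rw [hAL]; exact Finset.notMem_empty l)
      · exact ⟨l, hl, h⟩
  have hnc3 : ¬ (v ∈ B ∨ ∃ n ∈ N, n ∈ B) := by
    intro hc3
    -- then condition (2) must fail for B
    have hnc2 : ¬ ∀ n ∈ N, n ∈ B ∨ v ∈ B ∨ ∃ c ∈ L, p c = n ∧ c ∈ B := by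
      intro hc2
      exact hnB ⟨hfull, hc2, hc3.imp id id, Or.inr hB4⟩
    push_neg at hnc2
    obtain ⟨n₀, hn₀, hn₀B, hn₀vB, hn₀c⟩ := hnc2
    have key : ∀ (X : Finset V), X ∩ L = ∅ → v ∉ X → Cond v N L p (X ∪ B) → n₀ ∈ X := by
      intro X hXL hvX hX
      rcases hX.2.1 n₀ hn₀ with h | h | ⟨c, hcL, hpc, hcAB⟩
      · rcases Finset.mem_union.mp h with h | h
        · exact h
        · exact absurd h hn₀B
      · rcases Finset.mem_union.mp h with h | h
        · exact absurd h hvX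
        · exact absurd h hvB
      · rcases Finset.mem_union.mp hcAB with h | h
        · exact absurd (Finset.mem_inter.mpr ⟨h, hcL⟩) (by rw [hXL]; exact Finset.notMem_empty c)
        · exact absurd h (hn₀c c hcL hpc)
    exact Finset.disjoint_left.mp hAA' (key A hAL hvA hc) (key A' hA'L hvA' hc')
  push_neg at hnc3
  obtain ⟨hvB', hNB⟩ := hnc3
  have hBL : B = L := by
    apply Finset.Subset.antisymm
    · intro x hx
      rcases hs.cover x with rfl | h | h
      · exact absurd hx hvB'
      · exact absurd hx (hNB x h)
      · exact h
    · intro l hl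
      rcases hfull l hl with h | h
      · exact h
      · exact absurd h (hNB (p l) (hs.pmem l hl))
  refine ⟨hBL, ?_⟩
  intro n hn
  have hnB' : n ∉ B := hNB n hn
  have key : ∀ (X : Finset V), X ∩ L = ∅ → Cond v N L p (X ∪ B) → v ∉ X →
      n ∈ X ∨ ∃ c ∈ L, p c = n := by
    intro X hXL hX hvX
    rcases hX.2.1 n hn with h | h | ⟨c, hcL, hpc, _⟩
    · rcases Finset.mem_union.mp h with h | h
      · exact Or.inl h
      · exact absurd h hnB'
    · rcases Finset.mem_union.mp h with h | h
      · exact absurd h hvX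
      · exact absurd h hvB
    · exact Or.inr ⟨c, hcL, hpc⟩
  rcases key A hAL hc hvA with h | h
  · rcases key A' hA'L hc' hvA' with h' | h'
    · exact absurd h' (Finset.disjoint_left.mp hAA' h)
    · exact h'
  · exact h

end UB

theorem Struct.upper {v : V} {N L : Finset V} {p : V → V} {G : SimpleGraph V}
    (hs : Struct v N L p)
    (hchar : ∀ S : Finset V, IsGlobalDomSet G S ↔ Cond v N L p S)
    (π : Finpartition (Finset.univ : Finset V)) (hπ : IsGCPartition G π) :
    π.parts.card ≤ L.card + 2 := by
  classical
  -- basic partition facts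
  have hdisjP : ∀ A ∈ π.parts, ∀ B ∈ π.parts, A ≠ B → Disjoint A B := by
    intro A hA B hB hne
    exact π.disjoint hA hB hne
  have hne : ∀ A ∈ π.parts, A.Nonempty := fun A hA => π.nonempty_of_mem_parts hA
  have hexists : ∀ u : V, ∃ A ∈ π.parts, u ∈ A := fun u => π.exists_mem (Finset.mem_univ u)
  have huniq : ∀ A ∈ π.parts, ∀ B ∈ π.parts, ∀ x, x ∈ A → x ∈ B → A = B := by
    intro A hA B hB x hxA hxB
    by_contra hne'
    exact Finset.disjoint_left.mp (hdisjP A hA B hB hne') hxA hxB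
  -- partner function
  have hx : ∀ A ∈ π.parts, ∃ B, B ∈ π.parts ∧ B ≠ A ∧ Disjoint A B ∧ Cond v N L p (A ∪ B) := by
    intro A hA
    obtain ⟨-, B, hB, hBA, hdAB, -, -, hgd⟩ := hπ A hA
    exact ⟨B, hB, hBA, hdAB, (hchar _).mp hgd⟩
  choose! Bf hBf₁ hBf₂ hBf₃ hBf₄ using hx
  have hnc : ∀ A ∈ π.parts, ¬ Cond v N L p A := by
    intro A hA h
    exact (hπ A hA).1 ((hchar A).mpr h)
  -- the three classes of parts
  set T := π.parts.filter (fun A => (A ∩ L).Nonempty) with hT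
  set M := π.parts.filter (fun A => v ∉ A ∧ A ∩ L = ∅) with hM
  set W := π.parts.filter (fun A => v ∈ A ∧ A ∩ L = ∅) with hW
  have hsplit : π.parts.card = T.card + M.card + W.card := by
    have e1 : T.card + (π.parts.filter (fun A => ¬ (A ∩ L).Nonempty)).card = π.parts.card := by
      rw [hT]
      exact Finset.card_filter_add_card_filter_not (p := fun A => (A ∩ L).Nonempty)
    have e2 : ((π.parts.filter (fun A => ¬ (A ∩ L).Nonempty)).filter (fun A => v ∈ A)).card
        + ((π.parts.filter (fun A => ¬ (A ∩ L).Nonempty)).filter (fun A => ¬ v ∈ A)).card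
        = (π.parts.filter (fun A => ¬ (A ∩ L).Nonempty)).card := by
      exact Finset.card_filter_add_card_filter_not (p := fun A => v ∈ A)
    have hWeq : W = (π.parts.filter (fun A => ¬ (A ∩ L).Nonempty)).filter (fun A => v ∈ A) := by
      ext A
      simp only [hW, Finset.mem_filter, Finset.not_nonempty_iff_eq_empty, and_assoc]
      tauto
    have hMeq : M = (π.parts.filter (fun A => ¬ (A ∩ L).Nonempty)).filter (fun A => ¬ v ∈ A) := by
      ext A
      simp only [hM, Finset.mem_filter, Finset.not_nonempty_iff_eq_empty, and_assoc]
      tauto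
    rw [hWeq, hMeq]
    omega
  have hWle1 : W.card ≤ 1 := by
    apply Finset.card_le_one.mpr
    intro a ha b hb
    rw [hW, Finset.mem_filter] at ha hb
    exact huniq a ha.1 b hb.1 v ha.2.1 hb.2.1
  have hMsubN : ∀ A ∈ M, A ⊆ N := by
    intro A hA x hxA
    rw [hM, Finset.mem_filter] at hA
    rcases hs.cover x with rfl | h | h
    · exact absurd hxA hA.2.1
    · exact h
    · exact absurd (Finset.mem_inter.mpr ⟨hxA, h⟩)
        (by rw [hA.2.2]; exact Finset.notMem_empty x)
  -- counting leaves over the parts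
  have hTL : L.card = ∑ A ∈ T, (A ∩ L).card := by
    have hb : π.parts.biUnion (fun A => A ∩ L) = L := by
      ext u
      simp only [Finset.mem_biUnion, Finset.mem_inter]
      constructor
      · rintro ⟨A, -, -, h⟩; exact h
      · intro hu
        obtain ⟨A, hA, hAu⟩ := hexists u
        exact ⟨A, hA, hAu, hu⟩
    have hc := Finset.card_biUnion (s := π.parts) (t := fun A => A ∩ L) ?_
    · rw [hb] at hc
      rw [hc, ← Finset.sum_filter_add_sum_filter_not π.parts (fun A => (A ∩ L).Nonempty)]
      have : ∑ A ∈ π.parts.filter (fun A => ¬ (A ∩ L).Nonempty), (A ∩ L).card = 0 := by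
        apply Finset.sum_eq_zero
        intro A hA
        rw [Finset.mem_filter, Finset.not_nonempty_iff_eq_empty] at hA
        rw [hA.2]; rfl
      rw [this, Nat.add_zero]
    · intro A hA B hB hAB
      exact Finset.disjoint_left.mpr fun {x} hx hx' =>
        Finset.disjoint_left.mp (hdisjP A hA B hB hAB)
          (Finset.mem_inter.mp hx).1 (Finset.mem_inter.mp hx').1
  have hT_le : T.card ≤ ∑ A ∈ T, (A ∩ L).card := by
    calc T.card = ∑ _A ∈ T, 1 := by simp
    _ ≤ ∑ A ∈ T, (A ∩ L).card := by
      apply Finset.sum_le_sum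
      intro A hA
      rw [hT, Finset.mem_filter] at hA
      exact Nat.one_le_iff_ne_zero.mpr (Finset.card_ne_zero_of_mem hA.2.choose_spec)
  rw [hsplit]
  by_cases hM1 : M.card ≤ 1
  · omega
  push_neg at hM1
  -- facts about parts in M and their partners
  have hMfacts : ∀ A ∈ M, A ∈ π.parts ∧ v ∉ A ∧ A ∩ L = ∅ := by
    intro A hA; rw [hM, Finset.mem_filter] at hA; exact ⟨hA.1, hA.2.1, hA.2.2⟩
  have hBfT : ∀ A ∈ M, v ∉ Bf A → Bf A ∈ T := by
    intro A hAM hvB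
    obtain ⟨hAp, hvA, hAL⟩ := hMfacts A hAM
    rw [hT, Finset.mem_filter]
    refine ⟨hBf₁ A hAp, ?_⟩
    rcases (hBf₄ A hAp).2.2.2 with h | ⟨l, hl, hlAB⟩
    · rcases Finset.mem_union.mp h with h | h
      · exact absurd h hvA
      · exact absurd h hvB
    · rcases Finset.mem_union.mp hlAB with h | h
      · exact absurd (Finset.mem_inter.mpr ⟨h, hl⟩) (by rw [hAL]; exact Finset.notMem_empty l)
      · exact ⟨l, Finset.mem_inter.mpr ⟨h, hl⟩⟩
  set I := M.filter (fun A => v ∉ Bf A) with hI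
  have hIM : I ⊆ M := Finset.filter_subset _ _
  have hIfacts : ∀ A ∈ I, A ∈ π.parts ∧ v ∉ A ∧ A ∩ L = ∅ ∧ v ∉ Bf A := by
    intro A hA
    rw [hI, Finset.mem_filter] at hA
    obtain ⟨hp, hv, hl⟩ := hMfacts A hA.1
    exact ⟨hp, hv, hl, hA.2⟩
  have hMI : M.card ≤ I.card + 1 := by
    have hone : (M \ I).card ≤ 1 := by
      apply Finset.card_le_one.mpr
      intro a ha b hb
      rw [Finset.mem_sdiff] at ha hb
      have hva : v ∈ Bf a := by
        by_contra h
        exact ha.2 (by rw [hI, Finset.mem_filter]; exact ⟨ha.1, h⟩)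
      have hvb : v ∈ Bf b := by
        by_contra h
        exact hb.2 (by rw [hI, Finset.mem_filter]; exact ⟨hb.1, h⟩)
      obtain ⟨hap, hvA, haL⟩ := hMfacts a ha.1
      obtain ⟨hbp, hvB, hbL⟩ := hMfacts b hb.1
      by_contra hab
      have hBfeq : Bf a = Bf b :=
        huniq _ (hBf₁ a hap) _ (hBf₁ b hbp) v hva hvb
      have hfull := hs.full_of_two (hBf₄ a hap) (hBfeq ▸ hBf₄ b hbp) haL hbL
        (hdisjP a hap b hbp hab)
      exact hnc (Bf a) (hBf₁ a hap)
        (Struct.cond_of_v_mem hva hfull)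
    have := Finset.card_sdiff_add_card_eq_card hIM
    omega
  -- collision or injective
  by_cases hcol : ∃ A ∈ I, ∃ A' ∈ I, A ≠ A' ∧ Bf A = Bf A'
  · -- collision case : the common partner is L itself
    obtain ⟨A, hAI, A', hA'I, hAA', hBeq⟩ := hcol
    obtain ⟨hAp, hvA, hAL, hvBA⟩ := hIfacts A hAI
    obtain ⟨hA'p, hvA', hA'L, hvBA'⟩ := hIfacts A' hA'I
    have hBp : Bf A ∈ π.parts := hBf₁ A hAp
    have hc'4 : Cond v N L p (A' ∪ Bf A) := by rw [hBeq]; exact hBf₄ A' hA'p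
    have hd' : Disjoint A' (Bf A) := by rw [hBeq]; exact hBf₃ A' hA'p
    have hcol' := hs.collision (hBf₄ A hAp) hc'4 (hnc (Bf A) hBp)
      hvA hvA' hvBA hAL hA'L (hdisjP A hAp A' hA'p hAA') (hBf₃ A hAp) hd'
    obtain ⟨hBL, hNP⟩ := hcol'
    -- T = {B}
    have hBT : Bf A ∈ T := hBfT A (Finset.mem_of_mem_filter A hAI) hvBA
    have hT1 : T.card = 1 := by
      have : T = {Bf A} := by
        apply Finset.Subset.antisymm
        · intro C hC
          rw [hT, Finset.mem_filter] at hC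
          obtain ⟨l, hl⟩ := hC.2
          rw [Finset.mem_inter] at hl
          have hlB : l ∈ Bf A := by rw [hBL]; exact hl.2
          rw [Finset.mem_singleton]
          exact huniq C hC.1 (Bf A) hBp l hl.1 hlB
        · intro C hC
          rw [Finset.mem_singleton] at hC
          exact hC ▸ hBT
      rw [this, Finset.card_singleton]
    -- M.card ≤ N.card ≤ L.card
    have hMN : M.card ≤ N.card := by
      have hdb : ∀ A₁ ∈ M, ∀ A₂ ∈ M, A₁ ≠ A₂ → Disjoint (id A₁) (id A₂) := by
        intro A₁ h₁ A₂ h₂ hne'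
        exact hdisjP A₁ (hMfacts A₁ h₁).1 A₂ (hMfacts A₂ h₂).1 hne'
      have hcb := Finset.card_biUnion hdb
      have hsub : M.biUnion id ⊆ N := by
        intro x hx
        rw [Finset.mem_biUnion] at hx
        obtain ⟨A₁, hA₁, hxA₁⟩ := hx
        exact hMsubN A₁ hA₁ hxA₁
      have h1 : ∑ A₁ ∈ M, (id A₁).card ≤ N.card := by
        rw [← hcb]; exact Finset.card_le_card hsub
      have h2 : M.card ≤ ∑ A₁ ∈ M, (id A₁).card := by
        calc M.card = ∑ _A₁ ∈ M, 1 := by simp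
        _ ≤ _ := Finset.sum_le_sum fun A₁ hA₁ =>
          Finset.card_pos.mpr (hne A₁ (hMfacts A₁ hA₁).1)
      omega
    have hNL : N.card ≤ L.card := by
      choose! f hf₁ hf₂ using hNP
      apply Finset.card_le_card_of_injOn f hf₁
      intro a ha b hb hab
      rw [Finset.mem_coe] at ha hb
      rw [← hf₂ a ha, hab, hf₂ b hb]
    omega
  · -- injective case
    push_neg at hcol
    have hinjOn : ∀ a ∈ I, ∀ b ∈ I, Bf a = Bf b → a = b := by
      intro a ha b hb hab
      by_contra hne'
      exact hcol a ha b hb hne' hab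
    have hJcard : (I.image Bf).card = I.card :=
      Finset.card_image_of_injOn hinjOn
    have hJT : I.image Bf ⊆ T := by
      intro B₁ hB₁
      rw [Finset.mem_image] at hB₁
      obtain ⟨A, hAI, rfl⟩ := hB₁
      exact hBfT A (hIM hAI) (hIfacts A hAI).2.2.2
    -- a key step used repeatedly: children forced into the partner
    have hchild : ∀ A ∈ I, ∀ n ∈ N, n ∉ A → n ∉ Bf A → ∃ c ∈ Bf A ∩ L, p c = n := by
      intro A hAI n hn hnA hnB
      obtain ⟨hAp, hvA, hAL, hvB⟩ := hIfacts A hAI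
      exact hs.exists_child (hBf₄ A hAp) hvA hvB hAL hn hnA hnB
    by_cases hM3 : 3 ≤ M.card
    · -- every partner of a part of I contains at least two leaves
      have hbig : ∀ A ∈ I, 2 ≤ (Bf A ∩ L).card := by
        intro A hAI
        obtain ⟨hAp, hvA, hAL, hvB⟩ := hIfacts A hAI
        have hAM := hIM hAI
        have h2 : 1 < (M.erase A).card := by
          have := Finset.card_erase_of_mem hAM
          omega
        obtain ⟨A₁, hA₁, A₂, hA₂, h12⟩ := Finset.one_lt_card.mp h2
        have hA₁M := Finset.mem_of_mem_erase hA₁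
        have hA₂M := Finset.mem_of_mem_erase hA₂
        obtain ⟨n₁, hn₁⟩ := hne A₁ (hMfacts A₁ hA₁M).1
        obtain ⟨n₂, hn₂⟩ := hne A₂ (hMfacts A₂ hA₂M).1
        have hBT' : Bf A ∈ T := hBfT A hAM hvB
        have hgetc : ∀ A₀, A₀ ∈ M.erase A → ∀ n₀, n₀ ∈ A₀ → ∃ c ∈ Bf A ∩ L, p c = n₀ := by
          intro A₀ hA₀ n₀ hn₀
          have hA₀M := Finset.mem_of_mem_erase hA₀
          have hA₀A : A₀ ≠ A := Finset.ne_of_mem_erase hA₀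
          have hn₀N : n₀ ∈ N := hMsubN A₀ hA₀M hn₀
          have hn₀A : n₀ ∉ A :=
            Finset.disjoint_left.mp
              (hdisjP A₀ (hMfacts A₀ hA₀M).1 A (hMfacts A hAM).1 hA₀A) hn₀
          have hA₀B : A₀ ≠ Bf A := by
            intro h
            rw [hT, Finset.mem_filter] at hBT'
            obtain ⟨l, hl⟩ := hBT'.2
            rw [Finset.mem_inter] at hl
            have : l ∈ A₀ ∩ L := Finset.mem_inter.mpr ⟨h ▸ hl.1, hl.2⟩
            rw [(hMfacts A₀ hA₀M).2.2] at this
            exact Finset.notMem_empty l this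
          have hn₀B : n₀ ∉ Bf A :=
            Finset.disjoint_left.mp
              (hdisjP A₀ (hMfacts A₀ hA₀M).1 (Bf A) (hBf₁ A hAp) hA₀B) hn₀
          exact hchild A hAI n₀ hn₀N hn₀A hn₀B
        obtain ⟨c₁, hc₁, hpc₁⟩ := hgetc A₁ hA₁ n₁ hn₁
        obtain ⟨c₂, hc₂, hpc₂⟩ := hgetc A₂ hA₂ n₂ hn₂
        have hn12 : n₁ ≠ n₂ := by
          intro h
          exact Finset.disjoint_left.mp
            (hdisjP A₁ (hMfacts A₁ hA₁M).1 A₂ (hMfacts A₂ hA₂M).1 h12) hn₁ (h ▸ hn₂)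
        have : c₁ ≠ c₂ := by
          intro h
          exact hn12 (by rw [← hpc₁, h, hpc₂])
        exact Finset.one_lt_card.mpr ⟨c₁, hc₁, c₂, hc₂, this⟩
      -- summing up
      have hsum := (Finset.sum_sdiff hJT (f := fun A => (A ∩ L).card)).symm
      have hS2 : 2 * (I.image Bf).card ≤ ∑ A ∈ I.image Bf, (A ∩ L).card := by
        calc 2 * (I.image Bf).card = ∑ _A ∈ I.image Bf, 2 := by
              rw [Finset.sum_const, smul_eq_mul, mul_comm]
        _ ≤ _ := by
          apply Finset.sum_le_sum
          intro A₀ hA₀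
          rw [Finset.mem_image] at hA₀
          obtain ⟨A, hAI, rfl⟩ := hA₀
          exact hbig A hAI
      have hS1 : (T \ I.image Bf).card ≤ ∑ A ∈ T \ I.image Bf, (A ∩ L).card := by
        calc (T \ I.image Bf).card = ∑ _A ∈ T \ I.image Bf, 1 := by simp
        _ ≤ _ := by
          apply Finset.sum_le_sum
          intro A₀ hA₀
          have hA₀T := Finset.mem_sdiff.mp hA₀ |>.1
          rw [hT, Finset.mem_filter] at hA₀T
          exact Nat.one_le_iff_ne_zero.mpr (Finset.card_ne_zero_of_mem hA₀T.2.choose_spec)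
      have hcd : (T \ I.image Bf).card = T.card - (I.image Bf).card := Finset.card_sdiff_of_subset hJT
      have hJle : (I.image Bf).card ≤ T.card := Finset.card_le_card hJT
      omega
    · -- M.card = 2
      have hM2 : M.card = 2 := by omega
      by_cases hW0 : W.card = 0
      · omega
      have hW1 : W.card = 1 := by omega
      by_cases hT2 : ∃ B₀ ∈ T, 2 ≤ (B₀ ∩ L).card
      · obtain ⟨B₀, hB₀T, hB₀2⟩ := hT2
        have hsub : {B₀} ⊆ T := Finset.singleton_subset_iff.mpr hB₀T
        have hsum := (Finset.sum_sdiff hsub (f := fun A => (A ∩ L).card)).symm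
        have hS1 : (T \ {B₀}).card ≤ ∑ A ∈ T \ {B₀}, (A ∩ L).card := by
          calc (T \ {B₀}).card = ∑ _A ∈ T \ {B₀}, 1 := by simp
          _ ≤ _ := by
            apply Finset.sum_le_sum
            intro A₀ hA₀
            have hA₀T := Finset.mem_sdiff.mp hA₀ |>.1
            rw [hT, Finset.mem_filter] at hA₀T
            exact Nat.one_le_iff_ne_zero.mpr (Finset.card_ne_zero_of_mem hA₀T.2.choose_spec)
        have hsum0 : ∑ A ∈ ({B₀} : Finset (Finset V)), (A ∩ L).card = (B₀ ∩ L).card :=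
          Finset.sum_singleton _ _
        have hcd : (T \ {B₀}).card = T.card - 1 := by
          rw [Finset.card_sdiff_of_subset hsub, Finset.card_singleton]
        have h1T : 1 ≤ T.card := Finset.card_pos.mpr ⟨B₀, hB₀T⟩
        omega
      · -- every part meeting L contains exactly one leaf: contradiction
        exfalso
        push_neg at hT2
        have hTone : ∀ B₀ ∈ T, (B₀ ∩ L).card = 1 := by
          intro B₀ hB₀
          have h2 := hT2 B₀ hB₀
          rw [hT, Finset.mem_filter] at hB₀
          have := Finset.card_pos.mpr hB₀.2
          omega
        -- pick a part of I and its singleton-leaf partner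
        have hIne : I.Nonempty := Finset.card_pos.mp (by omega)
        obtain ⟨A, hAI⟩ := hIne
        obtain ⟨hAp, hvA, hAL, hvB⟩ := hIfacts A hAI
        have hAM : A ∈ M := hIM hAI
        have hBT : Bf A ∈ T := hBfT A hAM hvB
        have hBp : Bf A ∈ π.parts := hBf₁ A hAp
        obtain ⟨b, hbeq⟩ := Finset.card_eq_one.mp (hTone _ hBT)
        have hbB : b ∈ Bf A := (Finset.mem_inter.mp (hbeq ▸ Finset.mem_singleton_self b)).1
        have hbL : b ∈ L := (Finset.mem_inter.mp (hbeq ▸ Finset.mem_singleton_self b)).2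
        have s3 : ∀ n ∈ N, n ∉ A → n ∉ Bf A → n = p b := by
          intro n hn hnA hnB
          obtain ⟨c, hc, hpc⟩ := hchild A hAI n hn hnA hnB
          rw [hbeq, Finset.mem_singleton] at hc
          rw [← hpc, hc]
        -- the other part of M
        have hA'ne : (M.erase A).Nonempty := by
          apply Finset.card_pos.mp
          have := Finset.card_erase_of_mem hAM
          omega
        obtain ⟨A', hA'e⟩ := hA'ne
        have hA'M : A' ∈ M := Finset.mem_of_mem_erase hA'e
        have hA'A : A' ≠ A := Finset.ne_of_mem_erase hA'e
        obtain ⟨hA'p, hvA', hA'L⟩ := hMfacts A' hA'M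
        have hA'B : A' ≠ Bf A := by
          intro h
          have : b ∈ A' ∩ L := Finset.mem_inter.mpr ⟨h ▸ hbB, hbL⟩
          rw [hA'L] at this
          exact Finset.notMem_empty b this
        have hA'pb : ∀ x ∈ A', x = p b := by
          intro x hx
          refine s3 x (hMsubN A' hA'M hx) ?_ ?_
          · exact Finset.disjoint_left.mp (hdisjP A' hA'p A hAp hA'A) hx
          · exact Finset.disjoint_left.mp (hdisjP A' hA'p (Bf A) hBp hA'B) hx
        obtain ⟨x₀, hx₀⟩ := hne A' hA'p
        have hpbA' : p b ∈ A' := hA'pb x₀ hx₀ ▸ hx₀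
        have hA'single : A' = {p b} :=
          Finset.eq_singleton_iff_unique_mem.mpr ⟨hpbA', hA'pb⟩
        -- the part containing v is {v}
        have hWne : W.Nonempty := Finset.card_pos.mp (by omega)
        obtain ⟨Wp, hWpW⟩ := hWne
        have hWpfact := hWpW
        rw [hW, Finset.mem_filter] at hWpfact
        obtain ⟨hWpp, hvWp, hWpL⟩ := hWpfact
        have hWpA : Wp ≠ A := fun h => hvA (h ▸ hvWp)
        have hWpA' : Wp ≠ A' := fun h => hvA' (h ▸ hvWp)
        have hWpB : Wp ≠ Bf A := fun h => hvB (h ▸ hvWp)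
        have hWpN : ∀ x ∈ Wp, x ∉ N := by
          intro x hx hxN
          have hxA : x ∉ A := Finset.disjoint_left.mp (hdisjP Wp hWpp A hAp hWpA) hx
          have hxB : x ∉ Bf A := Finset.disjoint_left.mp (hdisjP Wp hWpp (Bf A) hBp hWpB) hx
          have := s3 x hxN hxA hxB
          exact Finset.disjoint_left.mp (hdisjP Wp hWpp A' hA'p hWpA') hx (this ▸ hpbA')
        have hWpv : Wp = {v} := by
          apply Finset.eq_singleton_iff_unique_mem.mpr
          refine ⟨hvWp, ?_⟩
          intro x hx
          rcases hs.cover x with rfl | h | h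
          · rfl
          · exact absurd h (hWpN x hx)
          · exact absurd (Finset.mem_inter.mpr ⟨hx, h⟩)
              (by rw [hWpL]; exact Finset.notMem_empty x)
        obtain ⟨l₁, hl₁, l₂, hl₂, hp12⟩ := hs.two
        by_cases hvB' : v ∈ Bf A'
        · -- partner of A' is {v} : all leaves have parent p b, contradiction
          have hB'Wp : Bf A' = Wp := huniq (Bf A') (hBf₁ A' hA'p) Wp hWpp v hvB' hvWp
          have hCc := hBf₄ A' hA'p
          rw [hB'Wp, hWpv] at hCc
          have hall : ∀ l ∈ L, p l = p b := by
            intro l hl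
            rcases hCc.1 l hl with h | h
            · rcases Finset.mem_union.mp h with h | h
              · exact absurd (Finset.mem_inter.mpr ⟨h, hl⟩)
                  (by rw [hA'L]; exact Finset.notMem_empty l)
              · rw [Finset.mem_singleton] at h
                exact absurd (h ▸ hl) hs.vL
            · rcases Finset.mem_union.mp h with h | h
              · rw [hA'single, Finset.mem_singleton] at h
                exact h
              · rw [Finset.mem_singleton] at h
                exact absurd (h ▸ hs.pmem l hl) hs.vN
          exact hp12 ((hall l₁ hl₁).trans (hall l₂ hl₂).symm)
        · -- A' is also in I
          have hA'I : A' ∈ I := by rw [hI, Finset.mem_filter]; exact ⟨hA'M, hvB'⟩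
          have hB'T : Bf A' ∈ T := hBfT A' hA'M hvB'
          have hB'p : Bf A' ∈ π.parts := hBf₁ A' hA'p
          obtain ⟨b', hb'eq⟩ := Finset.card_eq_one.mp (hTone _ hB'T)
          have hb'B : b' ∈ Bf A' := (Finset.mem_inter.mp (hb'eq ▸ Finset.mem_singleton_self b')).1
          have hb'L : b' ∈ L := (Finset.mem_inter.mp (hb'eq ▸ Finset.mem_singleton_self b')).2
          have s3' : ∀ n ∈ N, n ∉ A' → n ∉ Bf A' → n = p b' := by
            intro n hn hnA hnB
            obtain ⟨c, hc, hpc⟩ := hchild A' hA'I n hn hnA hnB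
            rw [hb'eq, Finset.mem_singleton] at hc
            rw [← hpc, hc]
          have hAB' : A ≠ Bf A' := by
            intro h
            have : b' ∈ A ∩ L := Finset.mem_inter.mpr ⟨h ▸ hb'B, hb'L⟩
            rw [hAL] at this
            exact Finset.notMem_empty b' this
          have hApb' : ∀ x ∈ A, x = p b' := by
            intro x hx
            refine s3' x (hMsubN A hAM hx) ?_ ?_
            · exact Finset.disjoint_left.mp (hdisjP A hAp A' hA'p (Ne.symm hA'A)) hx
            · exact Finset.disjoint_left.mp (hdisjP A hAp (Bf A') hB'p hAB') hx
          obtain ⟨y₀, hy₀⟩ := hne A hAp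
          have hpb'A : p b' ∈ A := hApb' y₀ hy₀ ▸ hy₀
          -- the partner of {v}
          have hCv := hBf₄ Wp hWpp
          have hfullBv : ∀ l ∈ L, l ∈ Bf Wp ∨ p l ∈ Bf Wp := by
            intro l hl
            rcases hCv.1 l hl with h | h
            · rcases Finset.mem_union.mp h with h | h
              · rw [hWpv, Finset.mem_singleton] at h
                exact absurd (h ▸ hl) hs.vL
              · exact Or.inl h
            · rcases Finset.mem_union.mp h with h | h
              · rw [hWpv, Finset.mem_singleton] at h
                exact absurd (h ▸ hs.pmem l hl) hs.vN
              · exact Or.inr h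
          have hBvp : Bf Wp ∈ π.parts := hBf₁ Wp hWpp
          rcases hfullBv b hbL with hcase | hcase
          · -- b ∈ Bf Wp, so Bf Wp = Bf A
            have hBvB : Bf Wp = Bf A := huniq (Bf Wp) hBvp (Bf A) hBp b hcase hbB
            rcases hfullBv b' hb'L with hc2 | hc2
            · -- b' ∈ Bf A, so b' = b and the two partners coincide
              have : b' ∈ Bf A ∩ L := Finset.mem_inter.mpr ⟨hBvB ▸ hc2, hb'L⟩
              rw [hbeq, Finset.mem_singleton] at this
              have hBB' : Bf A' = Bf A := huniq (Bf A') hB'p (Bf A) hBp b' hb'B (this ▸ hbB)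
              exact hA'A (hinjOn A' hA'I A hAI hBB')
            · -- p b' ∈ Bf A, but p b' ∈ A
              rw [hBvB] at hc2
              exact Finset.disjoint_left.mp (hBf₃ A hAp) hpb'A hc2
          · -- p b ∈ Bf Wp, so Bf Wp = A' and all parents equal p b
            have hBvA' : Bf Wp = A' := huniq (Bf Wp) hBvp A' hA'p (p b) hcase hpbA'
            have hall : ∀ l ∈ L, p l = p b := by
              intro l hl
              rcases hfullBv l hl with h | h
              · rw [hBvA'] at h
                exact absurd (Finset.mem_inter.mpr ⟨h, hl⟩)
                  (by rw [hA'L]; exact Finset.notMem_empty l)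
              · rw [hBvA', hA'single, Finset.mem_singleton] at h
                exact h
            exact hp12 ((hall l₁ hl₁).trans (hall l₂ hl₂).symm)


theorem gc_tree_radius_two_diam_four (G : SimpleGraph V) (ht : G.IsTree)
    (hr : graphRadius G = 2) (hd : graphDiam G = 4)
    (v : V) (hv : eccentricity G v = 2) (hvu : ∀ w : V, eccentricity G w = 2 → w = v) :
    globalCoalitionNumber G = (Finset.univ.filter fun u => G.dist v u = 2).card + 2 := by
  classical
  obtain ⟨hconn, hacyc⟩ := ht
  have hupath : ∀ {a b : V} (P Q : G.Walk a b), P.IsPath → Q.IsPath → P = Q := by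
    intro a b P Q hP hQ
    have := (SimpleGraph.isAcyclic_iff_path_unique.mp hacyc) ⟨P, hP⟩ ⟨Q, hQ⟩
    exact congrArg Subtype.val this
  have hdle : ∀ u : V, G.dist v u ≤ 2 := by
    intro u
    calc G.dist v u ≤ eccentricity G v := Finset.le_sup (Finset.mem_univ u)
    _ = 2 := hv
  have hd0 : ∀ u : V, G.dist v u = 0 ↔ u = v := by
    intro u
    rw [hconn.dist_eq_zero_iff]
    exact eq_comm
  set L : Finset V := Finset.univ.filter (fun u => G.dist v u = 2) with hLdef
  set Nv : Finset V := Finset.univ.filter (fun u => G.dist v u = 1) with hNdef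
  have memL : ∀ u : V, u ∈ L ↔ G.dist v u = 2 := by
    intro u; rw [hLdef, Finset.mem_filter]; simp
  have memN : ∀ u : V, u ∈ Nv ↔ G.dist v u = 1 := by
    intro u; rw [hNdef, Finset.mem_filter]; simp
  have cover : ∀ u : V, u = v ∨ u ∈ Nv ∨ u ∈ L := by
    intro u
    rw [memN, memL]
    have h1 := hdle u
    rcases (show G.dist v u = 0 ∨ G.dist v u = 1 ∨ G.dist v u = 2 by omega) with h | h | h
    · exact Or.inl ((hd0 u).mp h)
    · exact Or.inr (Or.inl h)
    · exact Or.inr (Or.inr h)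
  have adjN : ∀ u, u ∈ Nv ↔ G.Adj v u := by
    intro u; rw [memN, SimpleGraph.dist_eq_one_iff_adj]
  have t3 : ∀ l ∈ L, ¬ G.Adj v l := by
    intro l hl hadj
    rw [memL] at hl
    rw [← SimpleGraph.dist_eq_one_iff_adj] at hadj
    omega
  have hvnL : v ∉ L := by
    rw [memL]
    simp [SimpleGraph.dist_self]
  have hvnN : v ∉ Nv := by
    rw [memN]
    simp [SimpleGraph.dist_self]
  have hNLne : ∀ u ∈ Nv, u ∉ L := by
    intro u hu hu'
    rw [memN] at hu; rw [memL] at hu'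
    omega
  have t2 : ∀ n ∈ Nv, ∀ n' ∈ Nv, ¬ G.Adj n n' := by
    intro n hn n' hn' hadj
    have h1 : G.Adj v n := (adjN n).mp hn
    have h2 : G.Adj v n' := (adjN n').mp hn'
    have P1 : (SimpleGraph.Walk.cons h2 SimpleGraph.Walk.nil).IsPath := by
      simp [SimpleGraph.Walk.isPath_def, h2.ne]
    have P2 : (SimpleGraph.Walk.cons h1 (SimpleGraph.Walk.cons hadj
        SimpleGraph.Walk.nil)).IsPath := by
      simp [SimpleGraph.Walk.isPath_def, h1.ne, h2.ne, hadj.ne]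
    have heq := hupath _ _ P1 P2
    have hlen := congrArg SimpleGraph.Walk.length heq
    simp at hlen
  have hpar0 : ∀ l ∈ L, ∃ x ∈ Nv, G.Adj x l := by
    intro l hl
    rw [memL] at hl
    obtain ⟨w, hw⟩ := hconn.exists_walk_length_eq_dist v l
    rw [hl] at hw
    have h1 : G.Adj v (w.getVert 1) := by
      have := w.adj_getVert_succ (i := 0) (by omega)
      rwa [SimpleGraph.Walk.getVert_zero] at this
    have h2 : G.Adj (w.getVert 1) l := by
      have h3 : w.getVert 2 = l := by
        have := w.getVert_length
        rwa [hw] at this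
      have := w.adj_getVert_succ (i := 1) (by omega)
      rwa [h3] at this
    exact ⟨w.getVert 1, (adjN _).mpr h1, h2⟩
  have t4 : ∀ l ∈ L, ∀ l' ∈ L, ¬ G.Adj l l' := by
    intro l hl l' hl' hadj
    obtain ⟨x, hxN, hxl⟩ := hpar0 l hl
    obtain ⟨x', hx'N, hx'l'⟩ := hpar0 l' hl'
    have hvx : G.Adj v x := (adjN x).mp hxN
    have hvx' : G.Adj v x' := (adjN x').mp hx'N
    have hxl' : x ≠ l' := fun h => hNLne x hxN (h ▸ hl')
    have hx'l : x' ≠ l := fun h => hNLne x' hx'N (h ▸ hl)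
    have hvl : v ≠ l := fun h => hvnL (h ▸ hl)
    have hvl' : v ≠ l' := fun h => hvnL (h ▸ hl')
    by_cases hxx : x = x'
    · subst hxx
      have P1 : (SimpleGraph.Walk.cons hadj SimpleGraph.Walk.nil).IsPath := by
        simp [SimpleGraph.Walk.isPath_def, hadj.ne]
      have P2 : (SimpleGraph.Walk.cons hxl.symm (SimpleGraph.Walk.cons hx'l'
          SimpleGraph.Walk.nil)).IsPath := by
        simp [SimpleGraph.Walk.isPath_def]
        exact ⟨⟨fun h => hxl.ne h.symm, hadj.ne⟩, hxl'⟩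
      have heq := hupath _ _ P1 P2
      have hlen := congrArg SimpleGraph.Walk.length heq
      simp at hlen
    · have P1 : (SimpleGraph.Walk.cons hvx' (SimpleGraph.Walk.cons hx'l'
          SimpleGraph.Walk.nil)).IsPath := by
        simp [SimpleGraph.Walk.isPath_def]
        exact ⟨⟨hvx'.ne, hvl'⟩, hx'l'.ne⟩
      have P2 : (SimpleGraph.Walk.cons hvx (SimpleGraph.Walk.cons hxl
          (SimpleGraph.Walk.cons hadj SimpleGraph.Walk.nil))).IsPath := by
        simp [SimpleGraph.Walk.isPath_def]
        exact ⟨⟨hvx.ne, hvl, hvl'⟩, ⟨hxl.ne, hxl'⟩, hadj.ne⟩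
      have heq := hupath _ _ P1 P2
      have hlen := congrArg SimpleGraph.Walk.length heq
      simp at hlen
  -- uniqueness of the neighbour of a vertex at distance two
  have huniqnbr : ∀ l ∈ L, ∀ x y, G.Adj x l → G.Adj y l → x = y := by
    intro l hl x y hx hy
    have hclass : ∀ z, G.Adj z l → z ∈ Nv := by
      intro z hz
      rcases cover z with rfl | h | h
      · exact absurd hz (t3 l hl)
      · exact h
      · exact absurd hz (t4 z h l hl)
    have hxN := hclass x hx
    have hyN := hclass y hy
    have hvx : G.Adj v x := (adjN x).mp hxN
    have hvy : G.Adj v y := (adjN y).mp hyN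
    have hvl : v ≠ l := fun h => hvnL (h ▸ hl)
    have hxl : x ≠ l := fun h => hNLne x hxN (h ▸ hl)
    have hyl : y ≠ l := fun h => hNLne y hyN (h ▸ hl)
    have P1 : (SimpleGraph.Walk.cons hvx (SimpleGraph.Walk.cons hx
        SimpleGraph.Walk.nil)).IsPath := by
      simp [SimpleGraph.Walk.isPath_def]
      exact ⟨⟨hvx.ne, hvl⟩, hxl⟩
    have P2 : (SimpleGraph.Walk.cons hvy (SimpleGraph.Walk.cons hy
        SimpleGraph.Walk.nil)).IsPath := by
      simp [SimpleGraph.Walk.isPath_def]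
      exact ⟨⟨hvy.ne, hvl⟩, hyl⟩
    have heq := hupath _ _ P1 P2
    have hsup := congrArg SimpleGraph.Walk.support heq
    simp [SimpleGraph.Walk.support_cons] at hsup
    exact hsup
  -- define the parent function
  have hparex : ∀ l : V, ∃ x : V, l ∈ L →
      (x ∈ Nv ∧ G.Adj x l ∧ ∀ y, G.Adj y l → y = x) := by
    intro l
    by_cases hl : l ∈ L
    · obtain ⟨x, hxN, hxl⟩ := hpar0 l hl
      exact ⟨x, fun _ => ⟨hxN, hxl, fun y hy => huniqnbr l hl y x hy hxl⟩⟩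
    · exact ⟨v, fun h => absurd h hl⟩
  choose p hp using hparex
  have t1 : ∀ l ∈ L, G.Adj (p l) l := fun l hl => (hp l hl).2.1
  have t1' : ∀ l ∈ L, ∀ y, G.Adj y l → y = p l := fun l hl => (hp l hl).2.2
  have pmem : ∀ l ∈ L, p l ∈ Nv := fun l hl => (hp l hl).1
  -- two leaves with different parents, using the diameter
  have htwo : ∃ l₁ ∈ L, ∃ l₂ ∈ L, p l₁ ≠ p l₂ := by
    have hVne : (Finset.univ : Finset V).Nonempty := ⟨v, Finset.mem_univ v⟩
    obtain ⟨w, -, hw⟩ := Finset.exists_mem_eq_sup Finset.univ hVne (eccentricity G)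
    have hecc : eccentricity G w = 4 := by
      rw [← hw]; exact hd
    obtain ⟨u, -, hu⟩ := Finset.exists_mem_eq_sup Finset.univ hVne (fun u => G.dist w u)
    have hdist : G.dist w u = 4 := by
      rw [← hu]; exact hecc
    have htri : G.dist w u ≤ G.dist w v + G.dist v u := hconn.dist_triangle
    have hwv : G.dist w v = G.dist v w := SimpleGraph.dist_comm
    have h1 := hdle w
    have h2 := hdle u
    have hw2 : G.dist v w = 2 := by omega
    have hu2 : G.dist v u = 2 := by omega
    have hwL : w ∈ L := (memL w).mpr hw2
    have huL : u ∈ L := (memL u).mpr hu2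
    refine ⟨w, hwL, u, huL, ?_⟩
    intro hpp
    have hadj2 : G.Adj (p w) u := by rw [hpp]; exact t1 u huL
    have := SimpleGraph.dist_le (SimpleGraph.Walk.cons (t1 w hwL).symm
      (SimpleGraph.Walk.cons hadj2 SimpleGraph.Walk.nil))
    simp [SimpleGraph.Walk.length_cons] at this
    omega
  -- assemble the structure
  have hs : Struct v Nv L p :=
    { cover := cover
      vN := hvnN
      vL := hvnL
      NL := hNLne
      pmem := pmem
      two := htwo }
  -- the characterisation of global dominating sets
  have hchar : ∀ S : Finset V, IsGlobalDomSet G S ↔ Cond v Nv L p S := by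
    intro S
    constructor
    · rintro ⟨hG, hGc⟩
      refine ⟨?_, ?_, ?_, ?_⟩
      · intro l hl
        rcases hG l with h | ⟨x, hxS, hadj⟩
        · exact Or.inl h
        · exact Or.inr ((t1' l hl x hadj) ▸ hxS)
      · intro n hn
        rcases hG n with h | ⟨x, hxS, hadj⟩
        · exact Or.inl h
        · rcases cover x with rfl | h | h
          · exact Or.inr (Or.inl hxS)
          · exact absurd hadj (t2 x h n hn)
          · exact Or.inr (Or.inr ⟨x, h, (t1' x h n hadj.symm).symm, hxS⟩)
      · rcases hG v with h | ⟨x, hxS, hadj⟩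
        · exact Or.inl h
        · rcases cover x with rfl | h | h
          · exact absurd hadj (G.irrefl)
          · exact Or.inr ⟨x, h, hxS⟩
          · exact absurd hadj.symm (t3 x h)
      · rcases hGc v with h | ⟨x, hxS, hadj⟩
        · exact Or.inl h
        · rw [SimpleGraph.compl_adj] at hadj
          rcases cover x with rfl | h | h
          · exact absurd rfl hadj.1
          · exact absurd ((adjN x).mp h).symm hadj.2
          · exact Or.inr ⟨x, h, hxS⟩
    · intro hc
      obtain ⟨l₁, hl₁, l₂, hl₂, hp12⟩ := htwo
      constructor
      · -- dominating in G
        intro u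
        rcases cover u with rfl | h | h
        · rcases hc.2.2.1 with h | ⟨n, hn, hnS⟩
          · exact Or.inl h
          · exact Or.inr ⟨n, hnS, ((adjN n).mp hn).symm⟩
        · rcases hc.2.1 u h with h' | h' | ⟨c, hcL, hpc, hcS⟩
          · exact Or.inl h'
          · exact Or.inr ⟨v, h', (adjN u).mp h⟩
          · exact Or.inr ⟨c, hcS, hpc ▸ (t1 c hcL).symm⟩
        · rcases hc.1 u h with h' | h'
          · exact Or.inl h'
          · exact Or.inr ⟨p u, h', t1 u h⟩
      · -- dominating in the complement
        intro u
        rcases cover u with rfl | h | h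
        · rcases hc.2.2.2 with h | ⟨l, hl, hlS⟩
          · exact Or.inl h
          · refine Or.inr ⟨l, hlS, ?_⟩
            rw [SimpleGraph.compl_adj]
            exact ⟨fun he => hvnL (he ▸ hl), fun ha => t3 l hl ha.symm⟩
        · -- u in Nv
          by_cases huS : u ∈ S
          · exact Or.inl huS
          · have key : ∀ l, l ∈ L → p l ≠ u → (l ∈ S ∨ p l ∈ S) →
                ∃ x ∈ S, Gᶜ.Adj x u := by
              intro l hl hplu hor
              rcases hor with h' | h'
              · refine ⟨l, h', ?_⟩
                rw [SimpleGraph.compl_adj]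
                refine ⟨fun he => hNLne u h (he ▸ hl), fun ha => hplu (t1' l hl u ha.symm).symm⟩
              · refine ⟨p l, h', ?_⟩
                rw [SimpleGraph.compl_adj]
                exact ⟨hplu, t2 (p l) (pmem l hl) u h⟩
            by_cases hc1 : p l₁ = u
            · exact Or.inr (key l₂ hl₂ (fun he => hp12 (hc1.trans he.symm)) (hc.1 l₂ hl₂))
            · exact Or.inr (key l₁ hl₁ hc1 (hc.1 l₁ hl₁))
        · -- u in L
          by_cases huS : u ∈ S
          · exact Or.inl huS
          · by_cases hvS : v ∈ S
            · refine Or.inr ⟨v, hvS, ?_⟩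
              rw [SimpleGraph.compl_adj]
              exact ⟨fun he => hvnL (he ▸ h), fun ha => t3 u h ha⟩
            · have key : ∀ l, l ∈ L → p l ≠ p u → (l ∈ S ∨ p l ∈ S) →
                  ∃ x ∈ S, Gᶜ.Adj x u := by
                intro l hl hplu hor
                rcases hor with h' | h'
                · have hlu : l ≠ u := fun he => huS (he ▸ h')
                  refine ⟨l, h', ?_⟩
                  rw [SimpleGraph.compl_adj]
                  exact ⟨hlu, t4 l hl u h⟩
                · refine ⟨p l, h', ?_⟩
                  rw [SimpleGraph.compl_adj]
                  refine ⟨fun he => hNLne (p l) (pmem l hl) (he ▸ h), ?_⟩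
                  intro ha
                  exact hplu (t1' u h (p l) ha)
              by_cases hc1 : p l₁ = p u
              · exact Or.inr (key l₂ hl₂ (fun he => hp12 (hc1.trans he.symm)) (hc.1 l₂ hl₂))
              · exact Or.inr (key l₁ hl₁ hc1 (hc.1 l₁ hl₁))
  -- conclude
  obtain ⟨π₀, hgc₀, hcard₀⟩ := hs.lower hchar
  have hub : ∀ n ∈ {n | ∃ π : Finpartition (Finset.univ : Finset V),
      IsGCPartition G π ∧ π.parts.card = n}, n ≤ L.card + 2 := by
    rintro n ⟨π, hπ, rfl⟩
    exact hs.upper hchar π hπ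
  have hmem : (L.card + 2) ∈ {n | ∃ π : Finpartition (Finset.univ : Finset V),
      IsGCPartition G π ∧ π.parts.card = n} := ⟨π₀, hgc₀, hcard₀⟩
  rw [globalCoalitionNumber]
  exact le_antisymm (csSup_le ⟨_, hmem⟩ hub) (le_csSup ⟨L.card + 2, hub⟩ hmem)
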